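/- arXiv:2408.16508 — 5 statements merged into one kernel-verified Lean document; each statement's English description precedes it below -/
import Mathlib

section
/- Given a node-colored graph G = (V,E,C) and any colorful connected component S of G, every optimal solution to the MEC problem has at most |V∖S| + 1 colorful components. -/
/-- A subgraph is *colorful* if within each of its connected components all
node colors are pairwise distinct. -/
def Colorful {V C : Type*} (G' : SimpleGraph V) (c : V → C) : Prop :=
  ∀ u v : V, G'.Reachable u v → c u = c v → u = v

/-- Number of edges of the transitive closure of `G'`: one edge for each
unordered pair of distinct mutually reachable nodes. -/
noncomputable def tcEdges {V : Type*} (G' : SimpleGraph V) : ℕ :=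
  Nat.card {p : V × V // p.1 ≠ p.2 ∧ G'.Reachable p.1 p.2} / 2

/-- An optimal solution of the MEC problem: a spanning subgraph of `G` all of
whose components are colorful, maximizing the number of edges of the
transitive closure. -/
def IsMECOptimal {V C : Type*} (G G' : SimpleGraph V) (c : V → C) : Prop :=
  G' ≤ G ∧ Colorful G' c ∧
    ∀ H : SimpleGraph V, H ≤ G → Colorful H c → tcEdges H ≤ tcEdges G'

private lemma sum_succ_mul_le {ι : Type*} (t : Finset ι) (f : ι → ℕ) :
    ∑ i ∈ t, (f i + 1) * f i ≤ (∑ i ∈ t, f i + 1) * (∑ i ∈ t, f i) := by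
  classical
  induction t using Finset.induction_on with
  | empty => simp
  | @insert i t' h ih =>
    rw [Finset.sum_insert h, Finset.sum_insert h]
    have key : (f i + ∑ j ∈ t', f j + 1) * (f i + ∑ j ∈ t', f j)
        = (f i + 1) * f i + (∑ j ∈ t', f j + 1) * (∑ j ∈ t', f j)
          + 2 * (f i * ∑ j ∈ t', f j) := by ring
    linarith [ih, Nat.zero_le (f i * ∑ j ∈ t', f j)]


/-- Given any colorful connected component `S` of `G`, every optimal MEC
solution has at most `|V ∖ S| + 1` colorful components. -/
theorem stmt_4 {V C : Type*} [Fintype V] (G : SimpleGraph V) (c : V → C)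
    (S : Set V) (hconn : (G.induce S).Connected) (hcolS : Set.InjOn c S)
    (G' : SimpleGraph V) (hopt : IsMECOptimal G G' c) :
    Nat.card G'.ConnectedComponent ≤ Nat.card (Sᶜ : Set V) + 1 := by
  classical
  obtain ⟨hle, hcol, hmax⟩ := hopt
  -- the candidate graph H0 : all edges of G inside S
  set H0 : SimpleGraph V :=
    { Adj := fun u v => G.Adj u v ∧ u ∈ S ∧ v ∈ S
      symm := ⟨fun u v h => ⟨h.1.symm, h.2.2, h.2.1⟩⟩
      loopless := ⟨fun u h => G.loopless.irrefl u h.1⟩ } with hH0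
  have hH0le : H0 ≤ G := fun u v h => h.1
  have hmemS : ∀ u v : V, H0.Reachable u v → u ≠ v → u ∈ S ∧ v ∈ S := by
    intro u v hr hne
    obtain ⟨w⟩ := hr
    constructor
    · cases w with
      | nil => exact absurd rfl hne
      | cons h _ => exact h.2.1
    · have w' := w.reverse
      cases w' with
      | nil => exact absurd rfl hne.symm
      | cons h _ => exact h.2.1
  have hH0col : Colorful H0 c := by
    intro u v hr hc
    by_contra hne
    obtain ⟨hu, hv⟩ := hmemS u v hr hne
    exact hne (hcolS hu hv hc)
  have hreach : ∀ u v : V, u ∈ S → v ∈ S → H0.Reachable u v := by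
    have key : ∀ (x y : S), (G.induce S).Walk x y → H0.Reachable x.1 y.1 := by
      intro x y w
      induction w with
      | nil => exact SimpleGraph.Reachable.refl _
      | @cons a b d hadj p ih =>
        refine (SimpleGraph.Adj.reachable ?_).trans ih
        exact ⟨hadj, a.2, b.2⟩
    intro u v hu hv
    obtain ⟨w⟩ := hconn.preconnected ⟨u, hu⟩ ⟨v, hv⟩
    exact key _ _ w
  -- pair-counting finsets
  set P : SimpleGraph V → Finset (V × V) :=
    fun H => Finset.univ.filter fun p => p.1 ≠ p.2 ∧ H.Reachable p.1 p.2 with hP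
  have htc : ∀ H : SimpleGraph V, tcEdges H = (P H).card / 2 := by
    intro H
    rw [tcEdges, Nat.card_eq_fintype_card, Fintype.card_subtype]
  -- component fibers
  set VK : G'.ConnectedComponent → Finset V :=
    fun K => Finset.univ.filter fun v => G'.connectedComponentMk v = K with hVK
  have hfiber : ∀ K, ((P G').filter fun p => G'.connectedComponentMk p.1 = K)
      = (VK K).offDiag := by
    intro K
    ext ⟨u, v⟩
    simp only [hP, hVK, Finset.mem_filter, Finset.mem_offDiag, Finset.mem_univ,
      true_and]
    constructor
    · rintro ⟨⟨hne, hr⟩, hK⟩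
      refine ⟨hK, ?_, hne⟩
      rw [← hK]
      exact (SimpleGraph.ConnectedComponent.eq.2 hr).symm
    · rintro ⟨hu, hv, hne⟩
      exact ⟨⟨hne, SimpleGraph.ConnectedComponent.eq.1 (hu.trans hv.symm)⟩, hu⟩
  have hsplit : (P G').card = ∑ K : G'.ConnectedComponent, ((VK K).offDiag).card := by
    rw [Finset.card_eq_sum_card_fiberwise
      (f := fun p => G'.connectedComponentMk p.1) (t := Finset.univ)
      (fun x _ => Finset.mem_univ _)]
    exact Finset.sum_congr rfl fun K _ => by rw [hfiber K]
  -- sizes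
  set a : G'.ConnectedComponent → ℕ := fun K => (VK K).card - 1 with ha
  have hKcard : ∀ K, (VK K).card = a K + 1 := by
    intro K
    obtain ⟨v, hv⟩ := K.exists_rep
    have hvmem : v ∈ VK K := by
      simp only [hVK, Finset.mem_filter, Finset.mem_univ, true_and]
      exact hv
    have h1 : 1 ≤ (VK K).card := Finset.card_pos.2 ⟨v, hvmem⟩
    show (VK K).card = (VK K).card - 1 + 1
    omega
  have hoff : ∀ K, ((VK K).offDiag).card = (a K + 1) * a K := by
    intro K
    rw [Finset.offDiag_card, hKcard K]
    have h2 : (a K + 1) * (a K + 1) = (a K + 1) * a K + (a K + 1) := by ring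
    rw [h2, Nat.add_sub_cancel]
  set A : ℕ := ∑ K : G'.ConnectedComponent, a K with hA
  set N : ℕ := Fintype.card G'.ConnectedComponent with hN
  have hm' : (P G').card ≤ (A + 1) * A := by
    rw [hsplit]
    calc ∑ K : G'.ConnectedComponent, ((VK K).offDiag).card
        = ∑ K : G'.ConnectedComponent, (a K + 1) * a K :=
          Finset.sum_congr rfl fun K _ => hoff K
      _ ≤ (A + 1) * A := sum_succ_mul_le _ _
  -- total vertex count
  have hn : A + N = Fintype.card V := by
    have h1 : (Finset.univ : Finset V).card
        = ∑ K : G'.ConnectedComponent, (VK K).card :=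
      Finset.card_eq_sum_card_fiberwise
        (f := fun v => G'.connectedComponentMk v) (t := Finset.univ)
        (fun x _ => Finset.mem_univ _)
    rw [Finset.card_univ] at h1
    rw [hN, hA, ← Finset.card_univ (α := G'.ConnectedComponent)]
    rw [h1]
    rw [Finset.sum_congr rfl fun K _ => hKcard K, Finset.sum_add_distrib]
    simp
  -- lower bound from H0
  set sF : Finset V := S.toFinset with hsF
  have hsub : sF.offDiag ⊆ P H0 := by
    intro p hp
    rw [Finset.mem_offDiag] at hp
    simp only [hP, Finset.mem_filter, Finset.mem_univ, true_and]
    refine ⟨hp.2.2, hreach p.1 p.2 ?_ ?_⟩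
    · rw [← Set.mem_toFinset]; exact hp.1
    · rw [← Set.mem_toFinset]; exact hp.2.1
  have hlb : sF.card * sF.card - sF.card ≤ (P H0).card := by
    rw [← Finset.offDiag_card]
    exact Finset.card_le_card hsub
  -- compare
  have hcomp : (sF.card * sF.card - sF.card) / 2 ≤ ((A + 1) * A) / 2 := by
    calc (sF.card * sF.card - sF.card) / 2
        ≤ (P H0).card / 2 := Nat.div_le_div_right hlb
      _ = tcEdges H0 := (htc H0).symm
      _ ≤ tcEdges G' := hmax H0 hH0le hH0col
      _ = (P G').card / 2 := htc G'
      _ ≤ ((A + 1) * A) / 2 := Nat.div_le_div_right hm'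
  -- cardinal bookkeeping
  have hNcard : Nat.card G'.ConnectedComponent = N := Nat.card_eq_fintype_card
  have hScompl : sF.card + Nat.card (Sᶜ : Set V) = Fintype.card V := by
    have h1 : Nat.card (Sᶜ : Set V) = (sFᶜ).card := by
      rw [Nat.card_eq_fintype_card, ← Set.toFinset_card, Set.toFinset_compl]
    rw [h1, Finset.card_add_card_compl]
  rw [hNcard]
  set s : ℕ := sF.card
  set o : ℕ := Nat.card (Sᶜ : Set V)
  -- final arithmetic
  by_cases hs : s ≤ A + 1
  · omega
  · exfalso
    push_neg at hs
    obtain ⟨t, ht⟩ := Nat.exists_eq_add_of_le hs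
    have h1 : (A + 1) * A + 2 ≤ s * s - s := by
      have h2 : s * s = s * (s - 1) + s := by
        have : s - 1 + 1 = s := by omega
        nlinarith [this]
      have h3 : (A + 1) * A + 2 ≤ s * (s - 1) := by
        have hs1 : s - 1 = A + 1 + t := by omega
        have ht' : s = A + 2 + t := by omega
        rw [hs1, ht']
        nlinarith
      omega
    have h4 : ((A + 1) * A + 2) / 2 ≤ (s * s - s) / 2 := Nat.div_le_div_right h1
    rw [Nat.add_div_right _ (by norm_num)] at h4
    omega
end

section
/- Given k ≥ 2 pairwise disjoint maximum-cardinality colorful components S₁,...,S_k of a node-colored graph G = (V,E,C), each of size n, every optimal solution to the MEC problem has at most |V ∖ (S₁ ∪ ... ∪ S_k)| + k colorful components. -/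
section Aux

open SimpleGraph

/-- Cardinality of the set of off-diagonal pairs. -/
lemma card_offdiag_aux {α : Type*} [Finite α] :
    Nat.card {p : α × α // (p.1 : α) ≠ p.2} = Nat.card α * (Nat.card α - 1) := by
  classical
  cases nonempty_fintype α
  have e : {p : α × α // p.1 ≠ p.2} ≃ (a : α) × {b : α // b ≠ a} :=
    { toFun := fun p => ⟨p.1.1, ⟨p.1.2, fun h => p.2 h.symm⟩⟩
      invFun := fun x => ⟨(x.1, x.2.1), fun h => x.2.2 h.symm⟩
      left_inv := fun p => rfl
      right_inv := fun x => rfl }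
  rw [Nat.card_congr e]
  simp only [Nat.card_eq_fintype_card, Fintype.card_sigma]
  have : ∀ a : α, Fintype.card {b : α // b ≠ a} = Fintype.card α - 1 := by
    intro a
    rw [Fintype.card_subtype_compl, Fintype.card_subtype_eq]
  simp only [this, Finset.sum_const, Finset.card_univ, smul_eq_mul]

/-- Variant with values. -/
lemma card_offdiag_set {V : Type*} [Finite V] (s : Set V) :
    Nat.card {p : s × s // (p.1 : V) ≠ (p.2 : V)} = Nat.card s * (Nat.card s - 1) := by
  rw [← card_offdiag_aux (α := s)]
  exact Nat.card_congr (Equiv.subtypeEquivRight (fun p =>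
    not_congr Subtype.ext_iff.symm))

/-- `Nat.card` of a sigma type. -/
lemma nat_card_sigma {ι : Type*} [Fintype ι] {f : ι → Type*} [∀ i, Finite (f i)] :
    Nat.card ((i : ι) × f i) = ∑ i, Nat.card (f i) := by
  classical
  haveI := fun i => Fintype.ofFinite (f i)
  simp [Nat.card_eq_fintype_card, Fintype.card_sigma]

/-- The union of the `S i`'s restricted graph. -/
def restrictG {V : Type*} {k : ℕ} (G : SimpleGraph V) (S : Fin k → Set V) :
    SimpleGraph V where
  Adj u v := G.Adj u v ∧ ∃ i, u ∈ S i ∧ v ∈ S i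
  symm := by constructor; rintro u v ⟨h, i, hu, hv⟩; exact ⟨h.symm, i, hv, hu⟩
  loopless := by constructor; rintro u ⟨h, -⟩; exact G.irrefl h

lemma restrictG_walk_mem {V : Type*} {k : ℕ} {G : SimpleGraph V} {S : Fin k → Set V}
    (hdisj : ∀ i j, i ≠ j → Disjoint (S i) (S j)) {i : Fin k} {u v : V}
    (p : (restrictG G S).Walk u v) (hu : u ∈ S i) : v ∈ S i := by
  induction p with
  | nil => exact hu
  | @cons a b w h p ih =>
    obtain ⟨-, j, h1, h2⟩ := h
    have hij : i = j := by
      by_contra hij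
      exact Set.disjoint_left.mp (hdisj i j hij) hu h1
    exact ih (hij ▸ h2)

lemma induce_supp_connected' {V : Type*} {G G' : SimpleGraph V} (h : G' ≤ G)
    (K : G'.ConnectedComponent) : (G.induce K.supp).Connected := by
  classical
  obtain ⟨u, hu⟩ := K.exists_rep
  have hu' : u ∈ K.supp := hu
  apply G.induce_connected_of_patches u hu'
  intro v hv
  have hr : G'.Reachable u v := by
    rw [SimpleGraph.ConnectedComponent.mem_supp_iff] at hv
    exact SimpleGraph.ConnectedComponent.eq.mp (hu.trans hv.symm)
  obtain ⟨p⟩ := hr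
  refine ⟨{x | x ∈ p.support}, ?_, p.start_mem_support, p.end_mem_support, ?_⟩
  · intro x hx
    have : G'.Reachable u x := ⟨p.takeUntil x hx⟩
    rw [SimpleGraph.ConnectedComponent.mem_supp_iff, ← hu]
    exact (SimpleGraph.ConnectedComponent.eq.mpr this).symm
  · have hc := p.connected_induce_support
    have hle : G'.induce {x | x ∈ p.support} ≤ G.induce {x | x ∈ p.support} := by
      intro a b hab; exact h hab
    exact (hc.preconnected _ _).mono hle

end Aux

/-- Given `k ≥ 2` pairwise disjoint maximum-cardinality colorful components
`S₁, …, S_k` of `G`, each of size `n`, every optimal MEC solution has at most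
`|V ∖ (S₁ ∪ ⋯ ∪ S_k)| + k` colorful components. -/
theorem stmt_5 {V C : Type*} [Fintype V] (G : SimpleGraph V) (c : V → C)
    (k n : ℕ) (hk : 2 ≤ k) (S : Fin k → Set V)
    (hconn : ∀ i, (G.induce (S i)).Connected)
    (hcol : ∀ i, Set.InjOn c (S i))
    (hcard : ∀ i, Nat.card (S i) = n)
    (hmax : ∀ T : Set V, (G.induce T).Connected → Set.InjOn c T →
      Nat.card T ≤ n)
    (hdisj : ∀ i j, i ≠ j → Disjoint (S i) (S j))
    (G' : SimpleGraph V) (hopt : IsMECOptimal G G' c) :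
    Nat.card G'.ConnectedComponent ≤ Nat.card ((⋃ i, S i)ᶜ : Set V) + k := by
  classical
  obtain ⟨hle, hcolG', hoptim⟩ := hopt
  set q := Nat.card ((⋃ i, S i)ᶜ : Set V) with hq
  set m := Nat.card G'.ConnectedComponent with hm
  have hsurj : Function.Surjective (G'.connectedComponentMk) :=
    fun K => K.exists_rep
  have hmV : m ≤ Nat.card V := Nat.card_le_card_of_surjective _ hsurj
  -- cardinality of V
  have hcardV : Nat.card V = k * n + q := by
    have h1 : (⋃ i, S i).ncard + ((⋃ i, S i)ᶜ).ncard = Nat.card V :=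
      Set.ncard_add_ncard_compl _
    have h2 : Nat.card (⋃ i, S i : Set V) = k * n := by
      have e := Set.unionEqSigmaOfDisjoint (t := S)
        (fun i j hij => hdisj i j hij)
      rw [Nat.card_congr e, nat_card_sigma]
      calc ∑ i, Nat.card (S i) = ∑ _i : Fin k, n :=
            Finset.sum_congr rfl (fun i _ => hcard i)
        _ = k * n := by simp [Finset.sum_const, Finset.card_univ, mul_comm]
    rw [← h1, ← Nat.card_coe_set_eq, ← Nat.card_coe_set_eq, h2, ← hq]
  -- the comparison graph H
  set H : SimpleGraph V := restrictG G S with hH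
  have hHle : H ≤ G := fun {a b} hab => hab.1
  have hHcol : Colorful H c := by
    intro u v hr hc
    obtain ⟨w⟩ := hr
    cases w with
    | nil => rfl
    | cons h p =>
      obtain ⟨-, i, hu, hb⟩ := h
      exact hcol i hu (restrictG_walk_mem hdisj p hb) hc
  have hHreach : ∀ i : Fin k, ∀ u v : V, u ∈ S i → v ∈ S i → H.Reachable u v := by
    intro i u v hu hv
    have hrr := (hconn i).preconnected ⟨u, hu⟩ ⟨v, hv⟩
    letI f : G.induce (S i) →g H :=
      ⟨Subtype.val, fun {a b} hab => ⟨hab, i, a.2, b.2⟩⟩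
    exact hrr.map f
  -- lower bound for the pair count of H
  have hlb : k * n * (n - 1) ≤
      Nat.card {p : V × V // p.1 ≠ p.2 ∧ H.Reachable p.1 p.2} := by
    have hinj : Function.Injective
        (fun x : (i : Fin k) × {p : S i × S i // (p.1 : V) ≠ (p.2 : V)} =>
          (⟨((x.2.1.1 : V), (x.2.1.2 : V)),
            x.2.2, hHreach x.1 _ _ x.2.1.1.2 x.2.1.2.2⟩ :
            {p : V × V // p.1 ≠ p.2 ∧ H.Reachable p.1 p.2})) := by
      rintro ⟨i, ⟨⟨u, v⟩, huv⟩⟩ ⟨j, ⟨⟨u', v'⟩, huv'⟩⟩ heq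
      simp only [Subtype.mk.injEq, Prod.mk.injEq] at heq
      obtain ⟨h1, h2⟩ := heq
      have hij : i = j := by
        by_contra hij
        exact Set.disjoint_left.mp (hdisj i j hij) u.2 (h1 ▸ u'.2)
      subst hij
      exact congrArg (Sigma.mk i)
        (Subtype.ext (Prod.ext (Subtype.ext h1) (Subtype.ext h2)))
    have := Nat.card_le_card_of_injective _ hinj
    refine le_trans ?_ this
    rw [nat_card_sigma]
    have : ∀ i : Fin k, Nat.card {p : S i × S i // (p.1 : V) ≠ (p.2 : V)} = n * (n - 1) := by
      intro i; rw [card_offdiag_set, hcard i]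
    rw [Finset.sum_congr rfl (fun i _ => this i)]
    simp [Finset.sum_const, Finset.card_univ, mul_assoc]
  -- component sizes
  haveI : Finite G'.ConnectedComponent := Finite.of_surjective _ hsurj
  haveI : Fintype G'.ConnectedComponent := Fintype.ofFinite _
  set a : G'.ConnectedComponent → ℕ := fun K => Nat.card K.supp with ha
  have ha_le : ∀ K, a K ≤ n := by
    intro K
    exact hmax K.supp (induce_supp_connected' hle K) (by
      intro x hx y hy hcxy
      refine hcolG' x y ?_ hcxy
      rw [SimpleGraph.ConnectedComponent.mem_supp_iff] at hx hy
      exact SimpleGraph.ConnectedComponent.eq.mp (hx.trans hy.symm))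
  have ha_pos : ∀ K, 1 ≤ a K := by
    intro K
    obtain ⟨v, hv⟩ := K.exists_rep
    have : Nonempty K.supp := ⟨⟨v, hv⟩⟩
    exact Nat.one_le_iff_ne_zero.mpr (Nat.card_pos (α := K.supp)).ne'
  -- sum of component sizes is |V|
  have hsum_a : ∑ K : G'.ConnectedComponent, a K = Nat.card V := by
    rw [← Nat.card_congr (Equiv.sigmaFiberEquiv G'.connectedComponentMk), nat_card_sigma]
    rfl
  -- upper bound on pair count of G'
  have hub : Nat.card {p : V × V // p.1 ≠ p.2 ∧ G'.Reachable p.1 p.2} ≤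
      ∑ K : G'.ConnectedComponent, a K * (a K - 1) := by
    have hinj : Function.Injective
        (fun p : {p : V × V // p.1 ≠ p.2 ∧ G'.Reachable p.1 p.2} =>
          (⟨G'.connectedComponentMk p.1.1,
            ⟨(⟨p.1.1, rfl⟩, ⟨p.1.2, (SimpleGraph.ConnectedComponent.eq.mpr p.2.2.symm)⟩),
              p.2.1⟩⟩ :
            (K : G'.ConnectedComponent) × {x : K.supp × K.supp // (x.1 : V) ≠ (x.2 : V)})) := by
      intro p1 p2 hpq
      apply Subtype.ext
      exact congrArg
        (fun x : (K : G'.ConnectedComponent) ×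
            {x : K.supp × K.supp // (x.1 : V) ≠ (x.2 : V)} =>
          (((x.2.1.1 : V), (x.2.1.2 : V)) : V × V)) hpq
    have hc := Nat.card_le_card_of_injective _ hinj
    refine le_trans hc ?_
    rw [nat_card_sigma]
    refine le_of_eq (Finset.sum_congr rfl (fun K _ => ?_))
    rw [card_offdiag_set]
  -- arithmetic assembly
  by_contra hcon
  push_neg at hcon
  have hmge : q + k + 1 ≤ m := hcon
  -- n ≥ 2 or trivial
  rcases le_or_gt n 1 with hn1 | hn2
  · have : Nat.card V ≤ q + k := by
      rw [hcardV]
      have : k * n ≤ k := by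
        calc k * n ≤ k * 1 := Nat.mul_le_mul_left k hn1
        _ = k := mul_one k
      omega
    omega
  -- chain of inequalities
  have heven : 2 * (k * n * (n - 1) / 2) = k * n * (n - 1) := by
    have : 2 ∣ n * (n - 1) := by
      rcases Nat.even_or_odd n with h | h
      · exact Dvd.dvd.mul_right h.two_dvd _
      · exact Dvd.dvd.mul_left (Nat.Odd.sub_odd h odd_one).two_dvd _
    have : 2 ∣ k * n * (n - 1) := by
      rw [mul_assoc]; exact Dvd.dvd.mul_left this k
    omega
  have h1 : k * n * (n - 1) ≤ 2 * tcEdges G' := by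
    have hH2 : k * n * (n - 1) / 2 ≤ tcEdges H :=
      Nat.div_le_div_right hlb
    have := hoptim H hHle hHcol
    omega
  have h2 : 2 * tcEdges G' ≤ ∑ K : G'.ConnectedComponent, a K * (a K - 1) := by
    have : 2 * tcEdges G' ≤
        Nat.card {p : V × V // p.1 ≠ p.2 ∧ G'.Reachable p.1 p.2} := by
      unfold tcEdges
      omega
    omega
  set t := ∑ K : G'.ConnectedComponent, (a K - 1) with ht
  have h3 : ∑ K : G'.ConnectedComponent, a K * (a K - 1) ≤ n * t := by
    rw [ht, Finset.mul_sum]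
    exact Finset.sum_le_sum (fun K _ => Nat.mul_le_mul_right _ (ha_le K))
  have h4 : t + m = Nat.card V := by
    rw [← hsum_a, ht]
    calc (∑ K : G'.ConnectedComponent, (a K - 1)) + m
        = (∑ K : G'.ConnectedComponent, (a K - 1)) + ∑ _K : G'.ConnectedComponent, 1 := by
          rw [hm, Nat.card_eq_fintype_card, Finset.sum_const, smul_eq_mul, mul_one,
            Finset.card_univ]
      _ = ∑ K : G'.ConnectedComponent, ((a K - 1) + 1) := Finset.sum_add_distrib.symm
      _ = ∑ K : G'.ConnectedComponent, a K :=
          Finset.sum_congr rfl (fun K _ => by have := ha_pos K; omega)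
  -- t + k + 1 ≤ k * n
  have h5 : t + k + 1 ≤ k * n := by omega
  -- contradiction
  have h6 : k * n * (n - 1) ≤ n * t := le_trans h1 (le_trans h2 h3)
  obtain ⟨e, rfl⟩ : ∃ e, n = e + 2 := ⟨n - 2, by omega⟩
  have h7 : k * (e + 2) * (e + 1) ≤ (e + 2) * t := by simpa using h6
  nlinarith [h5, h7]
end

section
/- If S is a maximum-cardinality colorful component of a node-colored graph G, then in any optimal solution of the MEC problem, the number of non-removed edges is at least |S| − 1. -/
open SimpleGraph

/-- Case analysis for a walk after deleting one edge. -/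
lemma reach_del {V : Type*} (H : SimpleGraph V) (u v : V) {x y : V}
    (p : H.Walk x y) :
    (H.deleteEdges {s(u,v)}).Reachable x y ∨
      (((H.deleteEdges {s(u,v)}).Reachable x u ∨ (H.deleteEdges {s(u,v)}).Reachable x v) ∧
       ((H.deleteEdges {s(u,v)}).Reachable y u ∨ (H.deleteEdges {s(u,v)}).Reachable y v)) := by
  induction p with
  | nil => exact Or.inl (Reachable.refl _)
  | @cons a b w hab q ih =>
    by_cases he : s(a, b) = s(u, v)
    · rw [Sym2.eq_iff] at he
      have hxa : (H.deleteEdges {s(u,v)}).Reachable a u ∨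
          (H.deleteEdges {s(u,v)}).Reachable a v := by
        rcases he with ⟨rfl, rfl⟩ | ⟨rfl, rfl⟩
        · exact Or.inl (Reachable.refl _)
        · exact Or.inr (Reachable.refl _)
      have hbv : (H.deleteEdges {s(u,v)}).Reachable b u ∨
          (H.deleteEdges {s(u,v)}).Reachable b v := by
        rcases he with ⟨rfl, rfl⟩ | ⟨rfl, rfl⟩
        · exact Or.inr (Reachable.refl _)
        · exact Or.inl (Reachable.refl _)
      right
      refine ⟨hxa, ?_⟩
      rcases ih with h | ⟨_, hy⟩
      · rcases hbv with h1 | h1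
        · exact Or.inl (h.symm.trans h1)
        · exact Or.inr (h.symm.trans h1)
      · exact hy
    · have hab' : (H.deleteEdges {s(u,v)}).Adj a b := by
        rw [deleteEdges_adj]
        exact ⟨hab, by simpa using he⟩
      rcases ih with h | ⟨hb, hy⟩
      · exact Or.inl (hab'.reachable.trans h)
      · right
        refine ⟨?_, hy⟩
        rcases hb with h1 | h1
        · exact Or.inl (hab'.reachable.trans h1)
        · exact Or.inr (hab'.reachable.trans h1)

/-- Deleting one edge increases the number of connected components by at most one. -/
lemma cc_del_le {V : Type*} [Finite V] (H : SimpleGraph V) (u v : V) :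
    Nat.card (H.deleteEdges {s(u,v)}).ConnectedComponent ≤
      Nat.card H.ConnectedComponent + 1 := by
  classical
  set H' := H.deleteEdges {s(u,v)} with hH'
  set cv := H'.connectedComponentMk v with hcv
  have key : ∀ c1 c2 : H'.ConnectedComponent, c1 ≠ cv → c2 ≠ cv →
      c1.map (Hom.ofLE (deleteEdges_le _)) =
      c2.map (Hom.ofLE (deleteEdges_le _)) → c1 = c2 := by
    refine ConnectedComponent.ind₂ ?_
    intro x y hx hy h
    rw [ConnectedComponent.map_mk, ConnectedComponent.map_mk] at h
    have hr : H.Reachable x y := ConnectedComponent.exact h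
    obtain ⟨p⟩ := hr
    rcases reach_del H u v p with h' | ⟨hxu, hyu⟩
    · exact ConnectedComponent.sound h'
    · have hx' : H'.Reachable x u := by
        rcases hxu with h1 | h1
        · exact h1
        · exact absurd (ConnectedComponent.sound h1) hx
      have hy' : H'.Reachable y u := by
        rcases hyu with h1 | h1
        · exact h1
        · exact absurd (ConnectedComponent.sound h1) hy
      exact ConnectedComponent.sound (hx'.trans hy'.symm)
  let g : H'.ConnectedComponent → H.ConnectedComponent ⊕ Unit := fun c =>
    if c = cv then Sum.inr () else
      Sum.inl (c.map (Hom.ofLE (deleteEdges_le _)))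
  have hg : Function.Injective g := by
    intro c1 c2 h
    by_cases h1 : c1 = cv <;> by_cases h2 : c2 = cv
    · exact h1.trans h2.symm
    · simp only [g, if_pos h1, if_neg h2] at h
      exact absurd h (by simp)
    · simp only [g, if_neg h1, if_pos h2] at h
      exact absurd h (by simp)
    · simp only [g, if_neg h1, if_neg h2, Sum.inl.injEq] at h
      exact key c1 c2 h1 h2 h
  calc Nat.card H'.ConnectedComponent
      ≤ Nat.card (H.ConnectedComponent ⊕ Unit) := Nat.card_le_card_of_injective g hg
    _ = Nat.card H.ConnectedComponent + 1 := by simp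

/-- |V| ≤ |E| + #components. -/
lemma lemA {V : Type*} [Fintype V] :
    ∀ (N : ℕ) (H : SimpleGraph V), Nat.card H.edgeSet = N →
      Fintype.card V ≤ N + Nat.card H.ConnectedComponent := by
  intro N
  induction N with
  | zero =>
    intro H hH
    have hempty : H.edgeSet = ∅ := by
      rw [Nat.card_coe_set_eq] at hH
      exact (Set.ncard_eq_zero (Set.toFinite _)).mp hH
    have hbot : ∀ x y : V, H.Reachable x y → x = y := by
      intro x y h
      obtain ⟨p⟩ := h
      cases p with
      | nil => rfl
      | cons h' _ =>
        exact absurd (H.mem_edgeSet.mpr h') (by simp [hempty])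
    have hinj : Function.Injective H.connectedComponentMk := fun x y h =>
      hbot x y (ConnectedComponent.exact h)
    simpa using Nat.card_le_card_of_injective _ hinj
  | succ n ih =>
    intro H hH
    have hadj : ∃ u v : V, H.Adj u v := by
      by_contra hc
      push_neg at hc
      have : H.edgeSet = ∅ := by
        ext e
        induction e using Sym2.ind with
        | _ x y => simp [hc x y]
      rw [this] at hH
      simp at hH
    obtain ⟨u, v, huv⟩ := hadj
    have he : s(u,v) ∈ H.edgeSet := H.mem_edgeSet.mpr huv
    have hcard : Nat.card (H.deleteEdges {s(u,v)}).edgeSet = n := by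
      rw [Nat.card_coe_set_eq] at hH ⊢
      rw [edgeSet_deleteEdges, Set.ncard_diff_singleton_of_mem he]
      omega
    calc Fintype.card V
        ≤ n + Nat.card (H.deleteEdges {s(u,v)}).ConnectedComponent := ih _ hcard
      _ ≤ n + (Nat.card H.ConnectedComponent + 1) :=
          Nat.add_le_add_left (cc_del_le H u v) n
      _ = (n + 1) + Nat.card H.ConnectedComponent := by omega

/-- If all components of `H` have at most `n` vertices, then the number of ordered
reachable pairs is at most `n * |E(H)|`. -/
lemma pairs_le {V : Type*} [Fintype V] (H : SimpleGraph V) (n : ℕ)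
    (hcomp : ∀ c : H.ConnectedComponent, Nat.card c.supp ≤ n) :
    Nat.card {p : V × V // p.1 ≠ p.2 ∧ H.Reachable p.1 p.2} ≤ n * Nat.card H.edgeSet := by
  classical
  set F : H.ConnectedComponent → Finset V :=
    fun c => Finset.univ.filter (fun v => H.connectedComponentMk v = c) with hF
  set P : Finset (V × V) :=
    Finset.univ.filter (fun p : V × V => p.1 ≠ p.2 ∧ H.Reachable p.1 p.2) with hP
  have hcardP : Nat.card {p : V × V // p.1 ≠ p.2 ∧ H.Reachable p.1 p.2} = P.card := by
    rw [Nat.card_eq_fintype_card, Fintype.card_subtype]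
  have hcomp' : ∀ c : H.ConnectedComponent, (F c).card ≤ n := by
    intro c
    refine le_trans (le_of_eq ?_) (hcomp c)
    rw [Nat.card_eq_fintype_card, Fintype.card_subtype]
    congr 1
    ext v
    simp [hF, ConnectedComponent.mem_supp_iff]
  -- each component is nonempty
  have hFne : ∀ c : H.ConnectedComponent, 1 ≤ (F c).card := by
    refine ConnectedComponent.forall.mpr ?_
    intro v
    exact Finset.card_pos.mpr ⟨v, Finset.mem_filter.mpr ⟨Finset.mem_univ v, rfl⟩⟩
  -- sum of component sizes is card V
  have hsum : ∑ c : H.ConnectedComponent, (F c).card = Fintype.card V := by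
    rw [← Finset.card_univ]
    exact (Finset.card_eq_sum_card_fiberwise
      (f := fun v => H.connectedComponentMk v) (t := Finset.univ) (fun x _ => by simp)).symm
  -- fibers of P
  have hfiber : ∀ c : H.ConnectedComponent,
      (P.filter (fun p => H.connectedComponentMk p.1 = c)) = (F c).offDiag := by
    intro c
    ext p
    simp only [hP, hF, Finset.mem_filter, Finset.mem_univ, true_and, Finset.mem_offDiag]
    constructor
    · rintro ⟨⟨hne, hr⟩, hc⟩
      exact ⟨hc, (ConnectedComponent.sound hr.symm).trans hc, hne⟩
    · rintro ⟨h1, h2, hne⟩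
      exact ⟨⟨hne, ConnectedComponent.exact (h1.trans h2.symm)⟩, h1⟩
  have hPsum : P.card = ∑ c : H.ConnectedComponent, (F c).offDiag.card := by
    rw [Finset.card_eq_sum_card_fiberwise
      (f := fun p : V × V => H.connectedComponentMk p.1) (t := Finset.univ) (fun x _ => by simp)]
    exact Finset.sum_congr rfl fun c _ => by rw [hfiber c]
  have hterm : ∀ c : H.ConnectedComponent, (F c).offDiag.card ≤ n * ((F c).card - 1) := by
    intro c
    rw [Finset.offDiag_card]
    have h1 : (F c).card * (F c).card - (F c).card = (F c).card * ((F c).card - 1) := by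
      rw [← Nat.mul_pred]
      rfl
    rw [h1]
    exact Nat.mul_le_mul_right _ (hcomp' c)
  have hA := lemA (Nat.card H.edgeSet) H rfl
  have hsub : ∑ c : H.ConnectedComponent, ((F c).card - 1) ≤ Nat.card H.edgeSet := by
    have h2 : ∑ c : H.ConnectedComponent, ((F c).card - 1) + Nat.card H.ConnectedComponent
        = Fintype.card V := by
      rw [Nat.card_eq_fintype_card, ← Finset.card_univ, Finset.card_eq_sum_ones, ← hsum,
        ← Finset.sum_add_distrib]
      exact Finset.sum_congr rfl fun c _ => by have := hFne c; omega
    omega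
  calc Nat.card {p : V × V // p.1 ≠ p.2 ∧ H.Reachable p.1 p.2}
      = P.card := hcardP
    _ = ∑ c : H.ConnectedComponent, (F c).offDiag.card := hPsum
    _ ≤ ∑ c : H.ConnectedComponent, n * ((F c).card - 1) :=
        Finset.sum_le_sum fun c _ => hterm c
    _ = n * ∑ c : H.ConnectedComponent, ((F c).card - 1) := by rw [Finset.mul_sum]
    _ ≤ n * Nat.card H.edgeSet := Nat.mul_le_mul_left n hsub

lemma induce_reach_of_walk {V : Type*} (G G' : SimpleGraph V) (hle : G' ≤ G) (T : Set V) :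
    ∀ {x y : V} (_ : G'.Walk x y) (hx : x ∈ T) (hy : y ∈ T)
      (_ : ∀ z w : V, G'.Reachable z w → z ∈ T → w ∈ T),
      (G.induce T).Reachable ⟨x, hx⟩ ⟨y, hy⟩ := by
  intro x y p
  induction p with
  | nil => intro hx hy _; exact Reachable.refl _
  | @cons a b w h q ih =>
    intro hx hy hT
    have hb : b ∈ T := hT a b h.reachable hx
    have hadj : (G.induce T).Adj ⟨a, hx⟩ ⟨b, hb⟩ := by
      simp only [comap_adj, Function.Embedding.coe_subtype]
      exact hle h
    exact hadj.reachable.trans (ih hb hy hT)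

/-- If `S` is a maximum-cardinality colorful component of `G`, then any
optimal MEC solution keeps at least `|S| − 1` edges. -/
theorem stmt_6 {V C : Type*} [Fintype V] (G : SimpleGraph V) (c : V → C)
    (S : Set V) (hconn : (G.induce S).Connected) (hcolS : Set.InjOn c S)
    (hmax : ∀ T : Set V, (G.induce T).Connected → Set.InjOn c T →
      Nat.card T ≤ Nat.card S)
    (G' : SimpleGraph V) (hopt : IsMECOptimal G G' c) :
    Nat.card S - 1 ≤ Nat.card G'.edgeSet := by
  classical
  obtain ⟨hle, hcol, hbest⟩ := hopt
  set n := Nat.card S with hn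
  haveI : Nonempty ↑S := hconn.nonempty
  have hn1 : 0 < n := Nat.card_pos
  -- the candidate graph: edges of `G` inside `S`
  let HS : SimpleGraph V :=
    { Adj := fun x y => G.Adj x y ∧ x ∈ S ∧ y ∈ S
      symm := ⟨fun x y h => ⟨h.1.symm, h.2.2, h.2.1⟩⟩
      loopless := ⟨fun x h => G.loopless.irrefl x h.1⟩ }
  have hHSle : HS ≤ G := by intro a b h; exact h.1
  have hstayS : ∀ x y : V, HS.Reachable x y → x = y ∨ (x ∈ S ∧ y ∈ S) := by
    intro x y h
    obtain ⟨p⟩ := h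
    induction p with
    | nil => exact Or.inl rfl
    | cons h q ih =>
      right
      refine ⟨h.2.1, ?_⟩
      rcases ih with rfl | h'
      · exact h.2.2
      · exact h'.2
  have hcolHS : Colorful HS c := by
    intro u v hr hc
    rcases hstayS u v hr with rfl | ⟨hu, hv⟩
    · rfl
    · exact hcolS hu hv hc
  have hreachS : ∀ x y : V, x ∈ S → y ∈ S → HS.Reachable x y := by
    intro x y hx hy
    have h0 : (G.induce S).Reachable ⟨x, hx⟩ ⟨y, hy⟩ := hconn.preconnected _ _
    let f : G.induce S →g HS :=
      ⟨Subtype.val, fun {a b} hab => ⟨hab, a.2, b.2⟩⟩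
    exact h0.map f
  -- lower bound on pairs of HS
  have hSpairs : n * (n - 1) ≤
      Nat.card {p : V × V // p.1 ≠ p.2 ∧ HS.Reachable p.1 p.2} := by
    rw [Nat.card_eq_fintype_card, Fintype.card_subtype]
    have hsub : S.toFinset.offDiag ⊆
        Finset.univ.filter (fun p : V × V => p.1 ≠ p.2 ∧ HS.Reachable p.1 p.2) := by
      intro p hp
      rw [Finset.mem_offDiag] at hp
      simp only [Finset.mem_filter, Finset.mem_univ, true_and]
      exact ⟨hp.2.2, hreachS _ _ (Set.mem_toFinset.mp hp.1) (Set.mem_toFinset.mp hp.2.1)⟩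
    have hcard := Finset.card_le_card hsub
    have hcS : S.toFinset.card = n := by
      rw [Set.toFinset_card, hn, Nat.card_eq_fintype_card]
    rw [Finset.offDiag_card, hcS] at hcard
    have : n * (n - 1) = n * n - n := by
      rw [← Nat.mul_pred, Nat.pred_eq_sub_one]
    omega
  -- transfer to G' through optimality
  have h2 : n * (n - 1) ≤ Nat.card {p : V × V // p.1 ≠ p.2 ∧ G'.Reachable p.1 p.2} := by
    have hts : tcEdges HS ≤ tcEdges G' := hbest HS hHSle hcolHS
    have hdiv : n * (n - 1) / 2 ≤ tcEdges HS := Nat.div_le_div_right hSpairs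
    have h3 : n * (n - 1) / 2 ≤
        Nat.card {p : V × V // p.1 ≠ p.2 ∧ G'.Reachable p.1 p.2} / 2 :=
      le_trans hdiv hts
    have heven : 2 ∣ n * (n - 1) := by
      rcases Nat.even_or_odd n with h | h
      · exact Dvd.dvd.mul_right h.two_dvd _
      · obtain ⟨k, hk⟩ := h
        exact Dvd.dvd.mul_left ⟨k, by omega⟩ n
    have h4 : n * (n - 1) = 2 * (n * (n - 1) / 2) := (Nat.mul_div_cancel' heven).symm
    calc n * (n - 1) = 2 * (n * (n - 1) / 2) := h4
      _ ≤ 2 * (Nat.card {p : V × V // p.1 ≠ p.2 ∧ G'.Reachable p.1 p.2} / 2) :=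
          Nat.mul_le_mul_left 2 h3
      _ ≤ Nat.card {p : V × V // p.1 ≠ p.2 ∧ G'.Reachable p.1 p.2} := by
          rw [Nat.mul_comm]
          exact Nat.div_mul_le_self _ 2
  -- component sizes of G' are bounded by n
  have hcompG' : ∀ cc : G'.ConnectedComponent, Nat.card cc.supp ≤ n := by
    refine ConnectedComponent.forall.mpr ?_
    intro v
    set T : Set V := (G'.connectedComponentMk v).supp with hT
    have hmemT : ∀ x : V, x ∈ T ↔ G'.Reachable x v := by
      intro x
      rw [hT, ConnectedComponent.mem_supp_iff, ConnectedComponent.eq]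
    have hclosed : ∀ z w : V, G'.Reachable z w → z ∈ T → w ∈ T := by
      intro z w hr hz
      rw [hmemT] at hz ⊢
      exact hr.symm.trans hz
    refine hmax T ?_ ?_
    · rw [connected_iff]
      refine ⟨?_, ⟨⟨v, (hmemT v).mpr (Reachable.refl v)⟩⟩⟩
      rintro ⟨a, ha⟩ ⟨b, hb⟩
      have hra : G'.Reachable a b := ((hmemT a).mp ha).trans ((hmemT b).mp hb).symm
      obtain ⟨p⟩ := hra
      exact induce_reach_of_walk G G' hle T p ha hb hclosed
    · intro x hx y hy hc
      exact hcol x y (((hmemT x).mp hx).trans ((hmemT y).mp hy).symm) hc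
  have h4 := pairs_le G' n hcompG'
  have h5 : n * (n - 1) ≤ n * Nat.card G'.edgeSet := le_trans h2 h4
  exact Nat.le_of_mul_le_mul_left h5 hn1
end

section
/- For natural numbers n₁ ≥ n₂ ≥ ... ≥ n_k with each nᵢ ≤ n and Σ nᵢ = N, the sum Σ nᵢ(nᵢ−1)/2 is at most achieved by taking ⌊N/n⌋ components of size n and one of size N mod n; formally Σ nᵢ(nᵢ−1)/2 ≤ ⌊N/n⌋·n(n−1)/2 + r(r−1)/2 where r = N mod n. -/
lemma tri_dvd (x : ℕ) : 2 ∣ x * (x - 1) := by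
  rcases Nat.even_or_odd x with h | h
  · exact Dvd.dvd.mul_right h.two_dvd _
  · obtain ⟨k, hk⟩ := h
    exact Dvd.dvd.mul_left (⟨k, by omega⟩) _

lemma tri_cast (x : ℕ) : ((x * (x - 1) : ℕ) : ℤ) = (x : ℤ) * ((x : ℤ) - 1) := by
  cases x with
  | zero => simp
  | succ k => push_cast [Nat.succ_sub_one]; ring

/-- key step: adding one component of size `m ≤ n` to total `s`. -/
lemma key_step (n m s : ℕ) (hm : m ≤ n) :
    m * (m - 1) / 2 + ((s / n) * (n * (n - 1) / 2) + (s % n) * (s % n - 1) / 2)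
      ≤ ((s + m) / n) * (n * (n - 1) / 2) + ((s + m) % n) * ((s + m) % n - 1) / 2 := by
  rcases Nat.eq_zero_or_pos n with hn | hn
  · subst hn
    interval_cases m
    simp
  set q := s / n with hq
  set r := s % n with hr
  have hrn : r < n := Nat.mod_lt _ hn
  have hs : s = n * q + r := (Nat.div_add_mod s n).symm
  by_cases hcase : r + m < n
  · have hdiv : (s + m) / n = q := by
      rw [hs, Nat.add_assoc, Nat.mul_add_div hn]
      simp [Nat.div_eq_of_lt hcase]
    have hmod : (s + m) % n = r + m := by
      rw [hs, Nat.add_assoc, Nat.mul_add_mod]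
      exact Nat.mod_eq_of_lt hcase
    rw [hdiv, hmod]
    have hkey : m * (m - 1) + r * (r - 1) ≤ (r + m) * (r + m - 1) := by
      have := tri_cast m; have := tri_cast r; have := tri_cast (r + m)
      have : ((m * (m - 1) : ℕ) : ℤ) + ((r * (r - 1) : ℕ) : ℤ)
          ≤ (((r + m) * (r + m - 1) : ℕ) : ℤ) := by
        rw [tri_cast, tri_cast, tri_cast]
        push_cast
        nlinarith [mul_nonneg (Int.ofNat_nonneg r) (Int.ofNat_nonneg m)]
      exact_mod_cast this
    have d1 := tri_dvd m; have d2 := tri_dvd r; have d3 := tri_dvd (r + m)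
    omega
  · push_neg at hcase
    have hlt2 : r + m < 2 * n := by omega
    have hdiv : (s + m) / n = q + 1 := by
      rw [hs, Nat.add_assoc, Nat.mul_add_div hn]
      congr 1
      rw [Nat.div_eq_sub_div hn hcase, Nat.div_eq_of_lt (by omega)]
    have hmod : (s + m) % n = r + m - n := by
      rw [hs, Nat.add_assoc, Nat.mul_add_mod]
      rw [Nat.mod_eq_sub_mod hcase, Nat.mod_eq_of_lt (by omega)]
    rw [hdiv, hmod, Nat.add_mul, Nat.one_mul]
    set t := r + m - n with ht
    have htn : t + n = r + m := by omega
    have hkey : m * (m - 1) + r * (r - 1) ≤ n * (n - 1) + t * (t - 1) := by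
      have : ((m * (m - 1) : ℕ) : ℤ) + ((r * (r - 1) : ℕ) : ℤ)
          ≤ ((n * (n - 1) : ℕ) : ℤ) + ((t * (t - 1) : ℕ) : ℤ) := by
        rw [tri_cast, tri_cast, tri_cast, tri_cast]
        have hmn : (m : ℤ) ≤ n := by exact_mod_cast hm
        have hrn' : (r : ℤ) ≤ n := by exact_mod_cast hrn.le
        have htrm : (t : ℤ) + n = r + m := by exact_mod_cast htn
        nlinarith [mul_nonneg (sub_nonneg.mpr hmn) (sub_nonneg.mpr hrn')]
      exact_mod_cast this
    have d1 := tri_dvd m; have d2 := tri_dvd r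
    have d3 := tri_dvd n; have d4 := tri_dvd t
    omega

/-- For component sizes `n₁ ≥ n₂ ≥ ⋯ ≥ n_k`, each at most `n`, summing to `N`,
the total clique edge count `Σ nᵢ(nᵢ−1)/2` is at most
`⌊N/n⌋·n(n−1)/2 + r(r−1)/2` where `r = N mod n`. -/
theorem stmt_15 (n : ℕ) (l : List ℕ) (hsort : l.Pairwise (· ≥ ·))
    (hle : ∀ x ∈ l, x ≤ n) :
    (l.map (fun m => m * (m - 1) / 2)).sum
      ≤ (l.sum / n) * (n * (n - 1) / 2) + (l.sum % n) * (l.sum % n - 1) / 2 := by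
  induction l with
  | nil => simp
  | cons m t ih =>
    have hm : m ≤ n := hle m List.mem_cons_self
    have iht := ih hsort.of_cons (fun x hx => hle x (List.mem_cons_of_mem m hx))
    simp only [List.map_cons, List.sum_cons]
    calc m * (m - 1) / 2 + (t.map (fun m => m * (m - 1) / 2)).sum
        ≤ m * (m - 1) / 2 + ((t.sum / n) * (n * (n - 1) / 2) + (t.sum % n) * (t.sum % n - 1) / 2) :=
          by omega
      _ ≤ ((t.sum + m) / n) * (n * (n - 1) / 2) + ((t.sum + m) % n) * ((t.sum + m) % n - 1) / 2 :=
          key_step n m t.sum hm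
      _ = ((m + t.sum) / n) * (n * (n - 1) / 2) + ((m + t.sum) % n) * ((m + t.sum) % n - 1) / 2 :=
          by rw [Nat.add_comm t.sum m]
end

section
/- Let G be a node-colored graph, B a minimal edge cut of G with |B| = t splitting G into connected components G_B and G∖G_B, such that G_B is colorful, t-edge-connected, and contains all colors of the nodes in H = {v ∈ G∖G_B : ∃u ∈ G_B with {u,v} ∈ B}. Then any feasible MOP solution must remove at least t edges among those incident to G_B across any separation of G_B, so removing exactly B and keeping G_B intact is optimal restricted to those edges; i.e., there exists an optimal MOP solution containing all edges of B in the removed set. -/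
/-- An optimal solution of the MOP problem: a colorful spanning subgraph of
`G` keeping the maximum number of edges. -/
def IsMOPOptimal {V C : Type*} (G G' : SimpleGraph V) (c : V → C) : Prop :=
  G' ≤ G ∧ Colorful G' c ∧
    ∀ H : SimpleGraph V, H ≤ G → Colorful H c →
      Nat.card H.edgeSet ≤ Nat.card G'.edgeSet

/-- Let `B` be a minimal edge cut of `G` (the set of edges between `S` and its
complement, both inducing connected subgraphs), with `|B| = t`. If `G[S]` is
colorful, `t`-edge-connected, and contains all colors of the nodes of the
complement incident to `B`, then there exists an optimal MOP solution in
which all the edges of `B` are removed. -/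
theorem stmt_17 {V C : Type*} [Fintype V] (G : SimpleGraph V) (c : V → C)
    (S : Set V) (hS : S.Nonempty) (hSc : Sᶜ.Nonempty)
    (hconnS : (G.induce S).Connected) (hconnSc : (G.induce Sᶜ).Connected)
    (t : ℕ)
    (ht : t = Nat.card {e : Sym2 V // e ∈ G.edgeSet ∧
      ∃ u v : V, e = s(u, v) ∧ u ∈ S ∧ v ∉ S})
    (hcolS : Set.InjOn c S)
    (htconn : ∀ A : Set S, A.Nonempty → A ≠ Set.univ →
      t ≤ Nat.card {e : Sym2 S // e ∈ (G.induce S).edgeSet ∧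
        (∃ u ∈ A, u ∈ e) ∧ ∃ v ∈ Aᶜ, v ∈ e})
    (hcolors : ∀ v ∉ S, (∃ u ∈ S, G.Adj u v) → ∃ u ∈ S, c u = c v) :
    ∃ G' : SimpleGraph V, IsMOPOptimal G G' c ∧
      ∀ u v : V, u ∈ S → v ∉ S → ¬ G'.Adj u v := by
  classical
  have hfinG : Finite (SimpleGraph V) :=
    Finite.of_injective (fun H => H.Adj) fun _ _ h => SimpleGraph.ext h
  have hne : Nonempty {H : SimpleGraph V // H ≤ G ∧ Colorful H c} :=
    ⟨⟨⊥, bot_le, fun u v h _ => SimpleGraph.reachable_bot.mp h⟩⟩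
  obtain ⟨⟨G₀, hG₀le, hG₀col⟩, hmax⟩ :=
    Finite.exists_max (fun H : {H : SimpleGraph V // H ≤ G ∧ Colorful H c} =>
      Nat.card H.1.edgeSet)
  have hG₀max : ∀ H : SimpleGraph V, H ≤ G → Colorful H c →
      Nat.card H.edgeSet ≤ Nat.card G₀.edgeSet := fun H h1 h2 => hmax ⟨H, h1, h2⟩
  -- the modified graph
  set G'' : SimpleGraph V :=
    { Adj := fun a b => (G.Adj a b ∧ a ∈ S ∧ b ∈ S) ∨ (G₀.Adj a b ∧ a ∉ S ∧ b ∉ S)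
      symm := by
        refine ⟨?_⟩
        rintro a b (⟨h1, h2, h3⟩ | ⟨h1, h2, h3⟩)
        · exact Or.inl ⟨h1.symm, h3, h2⟩
        · exact Or.inr ⟨h1.symm, h3, h2⟩
      loopless := by
        refine ⟨?_⟩
        rintro a (⟨h1, -⟩ | ⟨h1, -⟩) <;> exact h1.ne rfl } with hG''
  have hle'' : G'' ≤ G := by
    rintro a b (⟨h1, -⟩ | ⟨h1, -⟩)
    exacts [h1, hG₀le h1]
  have hadj'' : ∀ a b : V, G''.Adj a b →
      (a ∈ S ↔ b ∈ S) ∧ (a ∉ S → G₀.Adj a b) := by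
    rintro a b (⟨h1, h2, h3⟩ | ⟨h1, h2, h3⟩)
    · exact ⟨⟨fun _ => h3, fun _ => h2⟩, fun h => absurd h2 h⟩
    · exact ⟨⟨fun h => absurd h h2, fun h => absurd h h3⟩, fun _ => h1⟩
  have hreach'' : ∀ a b : V, G''.Reachable a b →
      (a ∈ S ∧ b ∈ S) ∨ (a ∉ S ∧ b ∉ S ∧ G₀.Reachable a b) := by
    intro a b hr
    obtain ⟨w⟩ := hr
    induction w with
    | @nil a' =>
      by_cases h : a' ∈ S
      · exact Or.inl ⟨h, h⟩
      · exact Or.inr ⟨h, h, SimpleGraph.Reachable.refl _⟩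
    | @cons a x b h p ih =>
      obtain ⟨hiff, hG₀⟩ := hadj'' _ _ h
      by_cases haS : a ∈ S
      · have hxS : x ∈ S := hiff.mp haS
        rcases ih with ⟨-, hb⟩ | ⟨hx, -⟩
        · exact Or.inl ⟨haS, hb⟩
        · exact absurd hxS hx
      · have hxS : x ∉ S := fun h' => haS (hiff.mpr h')
        rcases ih with ⟨hx, -⟩ | ⟨-, hb, hrxb⟩
        · exact absurd hx hxS
        · exact Or.inr ⟨haS, hb, (hG₀ haS).reachable.trans hrxb⟩
  have hcol'' : Colorful G'' c := by
    intro u v hr hc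
    rcases hreach'' u v hr with ⟨h1, h2⟩ | ⟨-, -, hr₀⟩
    · exact hcolS h1 h2 hc
    · exact hG₀col u v hr₀ hc
  -- edge-set pieces
  set inS : SimpleGraph V → Set (Sym2 V) :=
    fun H => {e | e ∈ H.edgeSet ∧ ∀ x ∈ e, x ∈ S} with hinS
  set inSc : SimpleGraph V → Set (Sym2 V) :=
    fun H => {e | e ∈ H.edgeSet ∧ ∀ x ∈ e, x ∉ S} with hinSc
  set cross : Set (Sym2 V) :=
    {e | e ∈ G₀.edgeSet ∧ ∃ u v, e = s(u, v) ∧ u ∈ S ∧ v ∉ S} with hcross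
  have hE0 : G₀.edgeSet = (inS G₀ ∪ cross) ∪ inSc G₀ := by
    ext e
    induction e using Sym2.ind with
    | _ a b =>
      simp only [hinS, hinSc, hcross, Set.mem_union, Set.mem_setOf_eq,
        SimpleGraph.mem_edgeSet]
      constructor
      · intro h
        by_cases haS : a ∈ S <;> by_cases hbS : b ∈ S
        · refine Or.inl (Or.inl ⟨h, fun x hx => ?_⟩)
          rcases Sym2.mem_iff.mp hx with rfl | rfl <;> assumption
        · exact Or.inl (Or.inr ⟨h, a, b, rfl, haS, hbS⟩)
        · exact Or.inl (Or.inr ⟨h, b, a, Sym2.eq_swap, hbS, haS⟩)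
        · refine Or.inr ⟨h, fun x hx => ?_⟩
          rcases Sym2.mem_iff.mp hx with rfl | rfl <;> assumption
      · rintro ((⟨h, -⟩ | ⟨h, -⟩) | ⟨h, -⟩) <;> exact h
  have hE'' : G''.edgeSet = inS G ∪ inSc G₀ := by
    ext e
    induction e using Sym2.ind with
    | _ a b =>
      simp only [hinS, hinSc, Set.mem_union, Set.mem_setOf_eq,
        SimpleGraph.mem_edgeSet]
      constructor
      · rintro (⟨h1, h2, h3⟩ | ⟨h1, h2, h3⟩)
        · refine Or.inl ⟨h1, fun x hx => ?_⟩
          rcases Sym2.mem_iff.mp hx with rfl | rfl <;> assumption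
        · refine Or.inr ⟨h1, fun x hx => ?_⟩
          rcases Sym2.mem_iff.mp hx with rfl | rfl <;> assumption
      · rintro (⟨h1, h2⟩ | ⟨h1, h2⟩)
        · exact Or.inl ⟨h1, h2 a (Sym2.mem_mk_left a b), h2 b (Sym2.mem_mk_right a b)⟩
        · exact Or.inr ⟨h1, h2 a (Sym2.mem_mk_left a b), h2 b (Sym2.mem_mk_right a b)⟩
  -- disjointness
  have d1 : Disjoint (inS G₀) cross := by
    rw [Set.disjoint_left]
    rintro e ⟨-, hall⟩ ⟨-, u, v, rfl, -, hvS⟩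
    exact hvS (hall v (Sym2.mem_mk_right u v))
  have d2 : ∀ H H' : SimpleGraph V, Disjoint (inS H ∪ cross) (inSc H') := by
    intro H H'
    rw [Set.disjoint_left]
    rintro e (⟨-, hall⟩ | ⟨-, u, v, rfl, huS, -⟩) ⟨-, hall'⟩
    · exact hall' e.out.1 (Sym2.out_fst_mem e) (hall e.out.1 (Sym2.out_fst_mem e))
    · exact hall' u (Sym2.mem_mk_left u v) huS
  have d3 : Disjoint (inS G) (inSc G₀) := by
    have := d2 G G₀
    exact (Set.disjoint_union_left.mp this).1
  -- the key counting estimate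
  have hsub0 : inS G₀ ⊆ inS G := by
    rintro e ⟨he, h⟩
    exact ⟨SimpleGraph.edgeSet_mono hG₀le he, h⟩
  have hkey : (inS G₀).ncard + cross.ncard ≤ (inS G).ncard := by
    rcases Set.eq_empty_or_nonempty cross with hc0 | ⟨e, heE, u, v, rfl, huS, hvS⟩
    · rw [hc0, Set.ncard_empty, add_zero]
      exact Set.ncard_le_ncard hsub0 (Set.toFinite _)
    · have hadj : G₀.Adj u v := heE
      have hGadj : G.Adj u v := hG₀le hadj
      obtain ⟨u', hu'S, hcu'⟩ := hcolors v hvS ⟨u, huS, hGadj⟩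
      have hvne : v ≠ u' := fun h => hvS (h ▸ hu'S)
      have hnr : ¬G₀.Reachable v u' := fun h => hvne (hG₀col v u' h hcu'.symm)
      set A : Set S := {x | G₀.Reachable u ↑x} with hA
      have hAne : A.Nonempty := ⟨⟨u, huS⟩, SimpleGraph.Reachable.refl u⟩
      have hAnu : A ≠ Set.univ := by
        intro h
        have hmem : (⟨u', hu'S⟩ : S) ∈ A := h ▸ Set.mem_univ _
        exact hnr (hadj.symm.reachable.trans hmem)
      have hT := htconn A hAne hAnu
      set Bd : Set (Sym2 S) := {e | e ∈ (G.induce S).edgeSet ∧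
        (∃ x ∈ A, x ∈ e) ∧ ∃ y ∈ Aᶜ, y ∈ e} with hBd
      have himg : Sym2.map (Subtype.val : S → V) '' Bd ⊆ inS G \ inS G₀ := by
        rintro e ⟨e', he', rfl⟩
        revert he'
        induction e' using Sym2.ind with
        | _ x y =>
          rintro ⟨hEx, ⟨a, haA, haM⟩, ⟨b, hbA, hbM⟩⟩
          have hGxy : G.Adj ↑x ↑y := hEx
          rw [Sym2.map_pair_eq]
          constructor
          · refine ⟨hGxy, fun z hz => ?_⟩
            rcases Sym2.mem_iff.mp hz with rfl | rfl
            exacts [x.2, y.2]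
          · rintro ⟨hE₀, -⟩
            have hadjxy : G₀.Adj ↑x ↑y := hE₀
            have hstep : ∀ z w : S, G₀.Adj ↑z ↑w → z ∈ A → w ∈ A := by
              intro z w hzw hz
              exact hz.trans hzw.reachable
            rcases Sym2.mem_iff.mp haM with rfl | rfl <;>
              rcases Sym2.mem_iff.mp hbM with rfl | rfl
            · exact hbA haA
            · exact hbA (hstep _ _ hadjxy haA)
            · exact hbA (hstep _ _ hadjxy.symm haA)
            · exact hbA haA
      have hinj : Function.Injective (Sym2.map (Subtype.val : S → V)) :=
        Sym2.map.injective Subtype.val_injective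
      have h2 : t ≤ Bd.ncard := hT.trans_eq (Nat.card_coe_set_eq Bd)
      have h3 : Bd.ncard ≤ (inS G \ inS G₀).ncard := by
        rw [← Set.ncard_image_of_injective Bd hinj]
        exact Set.ncard_le_ncard himg (Set.toFinite _)
      have h4 : cross.ncard ≤ t := by
        rw [ht]
        have hsub : cross ⊆ {e : Sym2 V | e ∈ G.edgeSet ∧
            ∃ u v, e = s(u, v) ∧ u ∈ S ∧ v ∉ S} := by
          rintro e ⟨he, h⟩
          exact ⟨SimpleGraph.edgeSet_mono hG₀le he, h⟩
        calc cross.ncard ≤ _ := Set.ncard_le_ncard hsub (Set.toFinite _)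
          _ = _ := (Nat.card_coe_set_eq _).symm
      have h5 : (inS G₀).ncard + (inS G \ inS G₀).ncard = (inS G).ncard := by
        rw [add_comm]
        exact Set.ncard_diff_add_ncard_of_subset hsub0 (Set.toFinite _)
      omega
  -- conclude the count comparison
  have hcount : Nat.card G₀.edgeSet ≤ Nat.card G''.edgeSet := by
    rw [Nat.card_coe_set_eq, Nat.card_coe_set_eq, hE0, hE'',
      Set.ncard_union_eq (d2 G₀ G₀) (Set.toFinite _) (Set.toFinite _),
      Set.ncard_union_eq d1 (Set.toFinite _) (Set.toFinite _),
      Set.ncard_union_eq d3 (Set.toFinite _) (Set.toFinite _)]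
    omega
  refine ⟨G'', ⟨hle'', hcol'', fun H h1 h2 => (hG₀max H h1 h2).trans hcount⟩, ?_⟩
  rintro u v hu hv (⟨-, -, h3⟩ | ⟨-, h2, -⟩)
  exacts [hv h3, h2 hu]
end
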